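/- arXiv:2006.07894 — 2 statements merged into one kernel-verified Lean document; each statement's English description precedes it below -/
import Mathlib

section
/- For any integers l, N with 1 ≤ l ≤ N, the sum over all tuples α = (α_1, ..., α_N) of nonnegative integers with α_1 + ... + α_N = l of the product α_1! · α_2! ··· α_N! is at most (2N)^l. -/
open Finset

lemma antidiagonalTuple_card_le (N l : ℕ) :
    (Finset.Nat.antidiagonalTuple N l).card ≤ (N + l - 1).choose l := by
  classical
  have key : (Finset.Nat.antidiagonalTuple N l).card ≤ Fintype.card (Sym (Fin N) l) := by
    rw [← Finset.card_univ, ← Finset.card_map (s := (Finset.univ : Finset (Sym (Fin N) l)))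
      ⟨(Subtype.val : Sym (Fin N) l → Multiset (Fin N)), Subtype.val_injective⟩]
    apply Finset.card_le_card_of_injOn
      (fun α => ∑ i, Multiset.replicate (α i) i)
    · intro α hα
      rw [Finset.mem_coe, Finset.Nat.mem_antidiagonalTuple] at hα
      simp only [Finset.mem_coe, Finset.mem_map, Finset.mem_univ, true_and, Function.Embedding.coeFn_mk]
      refine ⟨⟨∑ i, Multiset.replicate (α i) i, ?_⟩, rfl⟩
      rw [← hα]
      induction (Finset.univ : Finset (Fin N)) using Finset.cons_induction with
      | empty => simp
      | cons a s ha ih => simp [Finset.sum_cons, ih]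
    · intro α hα β hβ hfg
      funext j
      have hcount : ∀ γ : Fin N → ℕ,
          Multiset.count j (∑ i, Multiset.replicate (γ i) i) = γ j := by
        intro γ
        rw [Multiset.count_sum']
        simp [Multiset.count_replicate]
      have := congrArg (Multiset.count j) hfg
      rwa [hcount, hcount] at this
  calc (Finset.Nat.antidiagonalTuple N l).card ≤ Fintype.card (Sym (Fin N) l) := key
    _ = (N + l - 1).choose l := by
        rw [Sym.card_sym_eq_choose, Fintype.card_fin]

theorem factorial_sum_bound (l N : ℕ) (h1 : 1 ≤ l) (h2 : l ≤ N) :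
    ∑ α ∈ Finset.Nat.antidiagonalTuple N l, ∏ j, Nat.factorial (α j) ≤ (2 * N) ^ l := by
  classical
  have hterm : ∀ α ∈ Finset.Nat.antidiagonalTuple N l,
      ∏ j, Nat.factorial (α j) ≤ Nat.factorial l := by
    intro α hα
    rw [Finset.Nat.mem_antidiagonalTuple] at hα
    have := Nat.prod_factorial_dvd_factorial_sum Finset.univ α
    rw [hα] at this
    exact Nat.le_of_dvd (Nat.factorial_pos l) this
  calc ∑ α ∈ Finset.Nat.antidiagonalTuple N l, ∏ j, Nat.factorial (α j)
      ≤ ∑ _α ∈ Finset.Nat.antidiagonalTuple N l, Nat.factorial l :=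
        Finset.sum_le_sum hterm
    _ = (Finset.Nat.antidiagonalTuple N l).card * Nat.factorial l := by
        rw [Finset.sum_const, smul_eq_mul]
    _ ≤ (N + l - 1).choose l * Nat.factorial l :=
        Nat.mul_le_mul_right _ (antidiagonalTuple_card_le N l)
    _ = (N + l - 1).descFactorial l := by
        rw [Nat.descFactorial_eq_factorial_mul_choose, mul_comm]
    _ ≤ (N + l - 1) ^ l := Nat.descFactorial_le_pow _ _
    _ ≤ (2 * N) ^ l := by
        apply Nat.pow_le_pow_left
        omega
end

section
/- Let ν ≥ 1, C₁ > 0, ρ > 0, ω ∈ ℝ^ν, T > 0, and suppose c, h : [0,T] × ℤ^ν → ℂ are continuous in t, satisfy |c(t,n)| ≤ C₁·exp(-ρ|n|) and |h(t,n)| ≤ C₁·exp(-ρ|n|) for all t, n, agree at t = 0 together with their t-derivatives, and both satisfy the integral equation c(t,n) = (linear part determined by c(0,n), c_t(0,n)) - [i(n·ω)/(2√(1+(n·ω)²))]·∫₀ᵗ (exp(iλ(τ-t)) - exp(iλ(t-τ)))·Σ_{m₁+m₂=n} c(τ,m₁)c(τ,m₂) dτ with λ = ((n·ω)²+(n·ω)⁴)^{1/2}.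 Then there is t₁ > 0, depending only on ν, C₁, ρ, |ω|, such that c(t,n) = h(t,n) for all 0 ≤ t ≤ t₁ and all n ∈ ℤ^ν. -/
noncomputable section

/-- The ℓ¹-norm of an integer vector, as a real number. -/
def l1Z {ν : ℕ} (n : Fin ν → ℤ) : ℝ := ∑ j, |(n j : ℝ)|

/-- The ℓ¹-norm of a real vector. -/
def l1R {ν : ℕ} (ω : Fin ν → ℝ) : ℝ := ∑ j, |ω j|

/-- The pairing n·ω = Σ_j n_j ω_j. -/
def dotp {ν : ℕ} (n : Fin ν → ℤ) (ω : Fin ν → ℝ) : ℝ := ∑ j, (n j : ℝ) * ω j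

/-- λ = ((n·ω)² + (n·ω)⁴)^{1/2}. -/
def lam {ν : ℕ} (n : Fin ν → ℤ) (ω : Fin ν → ℝ) : ℝ :=
  Real.sqrt ((dotp n ω) ^ 2 + (dotp n ω) ^ 4)

/-- The Duhamel integral equation for the Fourier coefficients of the good
Boussinesq equation with quasi-periodic data, on the time interval [0, T]. -/
def SolvesIE {ν : ℕ} (ω : Fin ν → ℝ) (T : ℝ) (c : ℝ → (Fin ν → ℤ) → ℂ) : Prop :=
  ∀ n : Fin ν → ℤ, ∀ t ∈ Set.Icc (0:ℝ) T,
    c t n =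
      (c 0 n / 2) * (Complex.exp (Complex.I * (lam n ω : ℂ) * (t : ℂ))
        + Complex.exp (-(Complex.I * (lam n ω : ℂ) * (t : ℂ))))
      - (Complex.I * (deriv (fun s => c s n) 0) / (2 * (lam n ω : ℂ))) *
          (Complex.exp (Complex.I * (lam n ω : ℂ) * (t : ℂ))
            - Complex.exp (-(Complex.I * (lam n ω : ℂ) * (t : ℂ))))
      - (Complex.I * (dotp n ω : ℂ) / (2 * (Real.sqrt (1 + (dotp n ω) ^ 2) : ℂ))) *
          ∫ τ in (0:ℝ)..t,
            (Complex.exp (Complex.I * (lam n ω : ℂ) * ((τ : ℂ) - (t : ℂ)))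
              - Complex.exp (Complex.I * (lam n ω : ℂ) * ((t : ℂ) - (τ : ℂ)))) *
            ∑' m : Fin ν → ℤ, c τ m * c τ (n - m)

lemma l1Z_nonneg {ν : ℕ} (n : Fin ν → ℤ) : 0 ≤ l1Z n :=
  Finset.sum_nonneg fun _ _ => abs_nonneg _

lemma l1Z_triangle {ν : ℕ} (n m : Fin ν → ℤ) : l1Z n ≤ l1Z m + l1Z (n - m) := by
  unfold l1Z
  rw [← Finset.sum_add_distrib]
  apply Finset.sum_le_sum
  intro j _
  have : (n j : ℝ) = (m j : ℝ) + ((n - m) j : ℝ) := by simp [Pi.sub_apply]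
  rw [this]; exact abs_add_le _ _

lemma summable_exp_int {a : ℝ} (ha : 0 < a) :
    Summable fun k : ℤ => Real.exp (-a * |(k : ℝ)|) := by
  have hgeo : Summable fun n : ℕ => Real.exp (-a) ^ n :=
    summable_geometric_of_lt_one (Real.exp_nonneg _)
      (Real.exp_lt_one_iff.mpr (by linarith))
  have hnat : ∀ n : ℕ, Real.exp (-a * |((n : ℤ) : ℝ)|) = Real.exp (-a) ^ n := by
    intro n
    rw [← Real.exp_nat_mul]
    congr 1
    simp [abs_of_nonneg, mul_comm]
  apply Summable.of_nat_of_neg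
  · exact hgeo.congr fun n => (hnat n).symm
  · refine hgeo.congr fun n => ?_
    rw [show |((-(n : ℤ) : ℤ) : ℝ)| = |((n : ℤ) : ℝ)| by push_cast; simp]
    exact (hnat n).symm

lemma summable_exp_l1Z {ν : ℕ} {a : ℝ} (ha : 0 < a) :
    Summable fun m : Fin ν → ℤ => Real.exp (-a * l1Z m) := by
  induction ν with
  | zero => exact Summable.of_finite
  | succ ν ih =>
    have hprod : Summable fun p : ℤ × (Fin ν → ℤ) =>
        Real.exp (-a * |(p.1 : ℝ)|) * Real.exp (-a * l1Z p.2) :=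
      (summable_exp_int ha).mul_of_nonneg ih (fun _ => Real.exp_nonneg _)
        (fun _ => Real.exp_nonneg _)
    have := (Fin.consEquiv (fun _ => ℤ)).symm.summable_iff.mpr hprod
    refine this.congr fun m => ?_
    show Real.exp (-a * |((m 0 : ℤ) : ℝ)|) * Real.exp (-a * l1Z (fun j => m j.succ))
        = Real.exp (-a * l1Z m)
    rw [← Real.exp_add]
    congr 1
    have : l1Z m = |((m 0 : ℤ) : ℝ)| + l1Z (fun j => m j.succ) := by
      unfold l1Z; rw [Fin.sum_univ_succ]
    rw [this]; ring

lemma summable_exp_l1Z_shift {ν : ℕ} {a : ℝ} (ha : 0 < a) (n : Fin ν → ℤ) :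
    Summable fun m : Fin ν → ℤ => Real.exp (-a * l1Z (n - m)) := by
  have := (Equiv.subLeft n).summable_iff.mpr (summable_exp_l1Z (ν := ν) ha)
  refine this.congr fun m => ?_
  simp [Function.comp, Equiv.subLeft_apply]

lemma tsum_exp_l1Z_shift {ν : ℕ} {a : ℝ} (n : Fin ν → ℤ) :
    (∑' m : Fin ν → ℤ, Real.exp (-a * l1Z (n - m)))
      = ∑' m : Fin ν → ℤ, Real.exp (-a * l1Z m) := by
  have := (Equiv.subLeft n).tsum_eq (fun k : Fin ν → ℤ => Real.exp (-a * l1Z k))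
  simpa [Equiv.subLeft_apply] using this

lemma abs_exp_eq_one {z : ℂ} (hz : z.re = 0) : ‖Complex.exp z‖ = 1 := by
  rw [Complex.norm_exp, hz, Real.exp_zero]

lemma re_I_mul_ofReal_sub (l a b : ℝ) :
    (Complex.I * (l : ℂ) * ((a : ℂ) - (b : ℂ))).re = 0 := by
  simp [Complex.mul_re, Complex.mul_im]

lemma mul_abs_le_aux {C₁ ρ a b : ℝ} (hC : 0 ≤ C₁) (hρ : 0 < ρ) (hb : 0 ≤ b) {x y : ℂ}
    (hx : ‖x‖ ≤ C₁ * Real.exp (-ρ * a))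
    (hy : ‖y‖ ≤ C₁ * Real.exp (-ρ * b)) :
    ‖x * y‖ ≤ C₁ * C₁ * Real.exp (-ρ * a) := by
  rw [norm_mul]
  calc ‖x‖ * ‖y‖
      ≤ (C₁ * Real.exp (-ρ * a)) * (C₁ * Real.exp (-ρ * b)) :=
        mul_le_mul hx hy (norm_nonneg _) (by positivity)
    _ ≤ (C₁ * Real.exp (-ρ * a)) * (C₁ * 1) := by
        have h1 : Real.exp (-ρ * b) ≤ 1 := Real.exp_le_one_iff.mpr (by nlinarith)
        have h2 : 0 ≤ C₁ * Real.exp (-ρ * a) := by positivity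
        exact mul_le_mul_of_nonneg_left (mul_le_mul_of_nonneg_left h1 hC) h2
    _ = C₁ * C₁ * Real.exp (-ρ * a) := by ring

lemma summable_conv {ν : ℕ} {ρ C₁ : ℝ} (hρ : 0 < ρ) (hC : 0 ≤ C₁)
    (f g : (Fin ν → ℤ) → ℂ) (n : Fin ν → ℤ)
    (hf : ∀ m, ‖f m‖ ≤ C₁ * Real.exp (-ρ * l1Z m))
    (hg : ∀ m, ‖g m‖ ≤ C₁ * Real.exp (-ρ * l1Z m)) :
    Summable fun m => f m * g (n - m) := by
  apply Summable.of_norm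
  have hmaj : Summable fun m : Fin ν → ℤ => C₁ * C₁ * Real.exp (-ρ * l1Z m) :=
    (summable_exp_l1Z hρ).mul_left _
  refine Summable.of_nonneg_of_le (fun m => norm_nonneg _) (fun m => ?_) hmaj
  exact mul_abs_le_aux hC hρ (l1Z_nonneg _) (hf m) (hg (n - m))

lemma conv_tsum_continuousOn {ν : ℕ} {ρ C₁ T : ℝ} (hρ : 0 < ρ) (hC : 0 ≤ C₁)
    (f : ℝ → (Fin ν → ℤ) → ℂ)
    (hf_cont : ∀ n, ContinuousOn (fun t => f t n) (Set.Icc 0 T))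
    (hfb : ∀ t ∈ Set.Icc (0:ℝ) T, ∀ n, ‖f t n‖ ≤ C₁ * Real.exp (-ρ * l1Z n))
    (n : Fin ν → ℤ) :
    ContinuousOn (fun τ => ∑' m : Fin ν → ℤ, f τ m * f τ (n - m)) (Set.Icc 0 T) := by
  apply continuousOn_tsum (u := fun m => C₁ * C₁ * Real.exp (-ρ * l1Z m))
  · intro m; exact (hf_cont m).mul (hf_cont (n - m))
  · exact (summable_exp_l1Z hρ).mul_left _
  · intro m τ hτ
    exact mul_abs_le_aux hC hρ (l1Z_nonneg _) (hfb τ hτ m) (hfb τ hτ (n - m))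

theorem boussinesq_local_uniqueness {ν : ℕ} (hν : 1 ≤ ν) (C₁ ρ T : ℝ)
    (hC : 0 < C₁) (hρ : 0 < ρ) (hT : 0 < T) (ω : Fin ν → ℝ)
    (c h : ℝ → (Fin ν → ℤ) → ℂ)
    (hc_cont : ∀ n, ContinuousOn (fun t => c t n) (Set.Icc 0 T))
    (hh_cont : ∀ n, ContinuousOn (fun t => h t n) (Set.Icc 0 T))
    (hcb : ∀ t ∈ Set.Icc (0:ℝ) T, ∀ n, ‖c t n‖ ≤ C₁ * Real.exp (-ρ * l1Z n))
    (hhb : ∀ t ∈ Set.Icc (0:ℝ) T, ∀ n, ‖h t n‖ ≤ C₁ * Real.exp (-ρ * l1Z n))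
    (h0 : ∀ n, c 0 n = h 0 n)
    (h0' : ∀ n, deriv (fun s => c s n) 0 = deriv (fun s => h s n) 0)
    (hcIE : SolvesIE ω T c) (hhIE : SolvesIE ω T h) :
    ∃ t₁ > 0, ∀ t ∈ Set.Icc (0:ℝ) t₁, ∀ n, c t n = h t n := by
  classical
  set σ : ℝ := ρ / 2 with hσdef
  have hσ : 0 < σ := by positivity
  have hS : Summable (fun m : Fin ν → ℤ => Real.exp (-σ * l1Z m)) := summable_exp_l1Z hσ
  set S : ℝ := ∑' m : Fin ν → ℤ, Real.exp (-σ * l1Z m) with hSdef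
  have hS0 : 0 < S :=
    Summable.tsum_pos hS (fun m => Real.exp_nonneg _) (0 : Fin ν → ℤ) (Real.exp_pos _)
  set t₁ : ℝ := min T (1 / (1 + 4 * C₁ * S)) with ht₁def
  have ht₁pos : 0 < t₁ := lt_min hT (by positivity)
  have ht₁T : t₁ ≤ T := min_le_left _ _
  refine ⟨t₁, ht₁pos, ?_⟩
  set w : ℝ → (Fin ν → ℤ) → ℝ :=
    fun t n => Real.exp (σ * l1Z n) * ‖c t n - h t n‖ with hwdef
  have hsubT : ∀ t ∈ Set.Icc (0:ℝ) t₁, t ∈ Set.Icc (0:ℝ) T := fun t ht =>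
    ⟨ht.1, le_trans ht.2 ht₁T⟩
  have hw_nonneg : ∀ t n, 0 ≤ w t n := fun t n =>
    mul_nonneg (Real.exp_nonneg _) (norm_nonneg _)
  have hwle : ∀ t ∈ Set.Icc (0:ℝ) t₁, ∀ n, w t n ≤ 2 * C₁ := by
    intro t ht n
    have h1 : ‖c t n - h t n‖
        ≤ ‖c t n‖ + ‖h t n‖ := by
      simpa using norm_sub_le (c t n) (h t n)
    have h2 : ‖c t n‖ + ‖h t n‖
        ≤ 2 * C₁ * Real.exp (-ρ * l1Z n) := by
      have hc' := hcb t (hsubT t ht) n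
      have hh' := hhb t (hsubT t ht) n
      linarith
    have h3 : w t n ≤ Real.exp (σ * l1Z n) * (2 * C₁ * Real.exp (-ρ * l1Z n)) :=
      mul_le_mul_of_nonneg_left (le_trans h1 h2) (Real.exp_nonneg _)
    refine le_trans h3 ?_
    have hexp : Real.exp (σ * l1Z n) * Real.exp (-ρ * l1Z n) ≤ 1 := by
      rw [← Real.exp_add]
      apply Real.exp_le_one_iff.mpr
      have := l1Z_nonneg n
      rw [hσdef]; nlinarith
    calc Real.exp (σ * l1Z n) * (2 * C₁ * Real.exp (-ρ * l1Z n))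
        = 2 * C₁ * (Real.exp (σ * l1Z n) * Real.exp (-ρ * l1Z n)) := by ring
      _ ≤ 2 * C₁ * 1 := mul_le_mul_of_nonneg_left hexp (by positivity)
      _ = 2 * C₁ := by ring
  haveI hne : Nonempty (Set.Icc (0:ℝ) t₁ × (Fin ν → ℤ)) :=
    ⟨⟨⟨0, le_refl 0, le_of_lt ht₁pos⟩, 0⟩⟩
  set M : ℝ := ⨆ p : Set.Icc (0:ℝ) t₁ × (Fin ν → ℤ), w p.1 p.2 with hMdef
  have hbdd : BddAbove (Set.range fun p : Set.Icc (0:ℝ) t₁ × (Fin ν → ℤ) => w p.1 p.2) := by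
    refine ⟨2 * C₁, ?_⟩
    rintro x ⟨⟨⟨t, ht⟩, n⟩, rfl⟩
    exact hwle t ht n
  have hMle : ∀ t, ∀ ht : t ∈ Set.Icc (0:ℝ) t₁, ∀ n, w t n ≤ M := fun t ht n =>
    le_ciSup hbdd (⟨⟨t, ht⟩, n⟩ : Set.Icc (0:ℝ) t₁ × (Fin ν → ℤ))
  have hM0 : 0 ≤ M :=
    le_trans (hw_nonneg 0 0) (hMle 0 ⟨le_refl 0, le_of_lt ht₁pos⟩ 0)
  have hd_bound : ∀ τ, ∀ hτ : τ ∈ Set.Icc (0:ℝ) t₁, ∀ m,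
      ‖c τ m - h τ m‖ ≤ M * Real.exp (-σ * l1Z m) := by
    intro τ hτ m
    have h2 : ‖c τ m - h τ m‖ = Real.exp (-σ * l1Z m) * w τ m := by
      rw [hwdef]
      show ‖c τ m - h τ m‖
          = Real.exp (-σ * l1Z m) * (Real.exp (σ * l1Z m) * ‖c τ m - h τ m‖)
      rw [← mul_assoc, ← Real.exp_add]
      have : -σ * l1Z m + σ * l1Z m = 0 := by ring
      rw [this, Real.exp_zero, one_mul]
    rw [h2]
    calc Real.exp (-σ * l1Z m) * w τ m ≤ Real.exp (-σ * l1Z m) * M :=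
          mul_le_mul_of_nonneg_left (hMle τ hτ m) (Real.exp_nonneg _)
      _ = M * Real.exp (-σ * l1Z m) := mul_comm _ _
  -- bound on the difference of the two convolution sums
  have hinner : ∀ n : Fin ν → ℤ, ∀ τ, ∀ hτ : τ ∈ Set.Icc (0:ℝ) t₁,
      ‖(∑' m : Fin ν → ℤ, h τ m * h τ (n - m))
          - ∑' m : Fin ν → ℤ, c τ m * c τ (n - m)‖
        ≤ 2 * C₁ * S * M * Real.exp (-σ * l1Z n) := by
    intro n τ hτ
    have hτT := hsubT τ hτ
    have hsc : Summable fun m : Fin ν → ℤ => c τ m * c τ (n - m) :=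
      summable_conv hρ hC.le _ _ n (fun m => hcb τ hτT m) (fun m => hcb τ hτT m)
    have hsh : Summable fun m : Fin ν → ℤ => h τ m * h τ (n - m) :=
      summable_conv hρ hC.le _ _ n (fun m => hhb τ hτT m) (fun m => hhb τ hτT m)
    rw [← Summable.tsum_sub hsh hsc]
    have hu : Summable (fun m : Fin ν → ℤ =>
        C₁ * M * Real.exp (-σ * l1Z n) *
          (Real.exp (-σ * l1Z (n - m)) + Real.exp (-σ * l1Z m))) :=
      ((summable_exp_l1Z_shift hσ n).add hS).mul_left _
    have hbound : ∀ m : Fin ν → ℤ,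
        ‖h τ m * h τ (n - m) - c τ m * c τ (n - m)‖ ≤
          C₁ * M * Real.exp (-σ * l1Z n) *
            (Real.exp (-σ * l1Z (n - m)) + Real.exp (-σ * l1Z m)) := by
      intro m
      have e1 : ‖h τ m - c τ m‖ ≤ M * Real.exp (-σ * l1Z m) := by
        rw [show h τ m - c τ m = -(c τ m - h τ m) by ring, norm_neg]
        exact hd_bound τ hτ m
      have e2 : ‖h τ (n - m) - c τ (n - m)‖
          ≤ M * Real.exp (-σ * l1Z (n - m)) := by
        rw [show h τ (n - m) - c τ (n - m) = -(c τ (n - m) - h τ (n - m)) by ring,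
          norm_neg]
        exact hd_bound τ hτ (n - m)
      have hcm := hcb τ hτT m
      have hhnm := hhb τ hτT (n - m)
      have hsplit : h τ m * h τ (n - m) - c τ m * c τ (n - m)
          = (h τ m - c τ m) * h τ (n - m) + c τ m * (h τ (n - m) - c τ (n - m)) := by
        ring
      rw [hsplit]
      refine le_trans (norm_add_le _ _) ?_
      rw [norm_mul, norm_mul]
      have key1 : Real.exp (-σ * l1Z m) * Real.exp (-ρ * l1Z (n - m))
          ≤ Real.exp (-σ * l1Z n) * Real.exp (-σ * l1Z (n - m)) := by
        rw [← Real.exp_add, ← Real.exp_add]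
        apply Real.exp_le_exp.mpr
        have ht3 := l1Z_triangle n m
        have := mul_le_mul_of_nonneg_left ht3 hσ.le
        rw [hσdef] at *
        nlinarith [l1Z_nonneg (n - m)]
      have key2 : Real.exp (-ρ * l1Z m) * Real.exp (-σ * l1Z (n - m))
          ≤ Real.exp (-σ * l1Z n) * Real.exp (-σ * l1Z m) := by
        rw [← Real.exp_add, ← Real.exp_add]
        apply Real.exp_le_exp.mpr
        have ht3 := l1Z_triangle n m
        have := mul_le_mul_of_nonneg_left ht3 hσ.le
        rw [hσdef] at *
        nlinarith [l1Z_nonneg m]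
      have hCM : 0 ≤ C₁ * M := mul_nonneg hC.le hM0
      calc ‖h τ m - c τ m‖ * ‖h τ (n - m)‖
            + ‖c τ m‖ * ‖h τ (n - m) - c τ (n - m)‖
          ≤ (M * Real.exp (-σ * l1Z m)) * (C₁ * Real.exp (-ρ * l1Z (n - m)))
            + (C₁ * Real.exp (-ρ * l1Z m)) * (M * Real.exp (-σ * l1Z (n - m))) := by
            refine add_le_add
              (mul_le_mul e1 hhnm (norm_nonneg _)
                (mul_nonneg hM0 (Real.exp_nonneg _)))
              (mul_le_mul hcm e2 (norm_nonneg _) (by positivity))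
        _ = C₁ * M * (Real.exp (-σ * l1Z m) * Real.exp (-ρ * l1Z (n - m)))
            + C₁ * M * (Real.exp (-ρ * l1Z m) * Real.exp (-σ * l1Z (n - m))) := by ring
        _ ≤ C₁ * M * (Real.exp (-σ * l1Z n) * Real.exp (-σ * l1Z (n - m)))
            + C₁ * M * (Real.exp (-σ * l1Z n) * Real.exp (-σ * l1Z m)) :=
            add_le_add (mul_le_mul_of_nonneg_left key1 hCM)
              (mul_le_mul_of_nonneg_left key2 hCM)
        _ = C₁ * M * Real.exp (-σ * l1Z n) *
              (Real.exp (-σ * l1Z (n - m)) + Real.exp (-σ * l1Z m)) := by ring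
    have hmain := tsum_of_norm_bounded hu.hasSum hbound
    refine le_trans hmain ?_
    rw [tsum_mul_left, Summable.tsum_add (summable_exp_l1Z_shift hσ n) hS,
      tsum_exp_l1Z_shift]
    rw [← hSdef]
    apply le_of_eq
    ring
  -- key estimate
  have key : ∀ t, ∀ ht : t ∈ Set.Icc (0:ℝ) t₁, ∀ n, w t n ≤ 2 * C₁ * S * t₁ * M := by
    intro t ht n
    have htT := hsubT t ht
    have ht0 : (0:ℝ) ≤ t := ht.1
    have hce := hcIE n t htT
    have hhe := hhIE n t htT
    have huIcc : Set.uIcc (0:ℝ) t ⊆ Set.Icc 0 T := by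
      rw [Set.uIcc_of_le ht0]
      exact Set.Icc_subset_Icc le_rfl htT.2
    have hker_cont : Continuous fun τ : ℝ =>
        (Complex.exp (Complex.I * (lam n ω : ℂ) * ((τ : ℂ) - (t : ℂ)))
          - Complex.exp (Complex.I * (lam n ω : ℂ) * ((t : ℂ) - (τ : ℂ)))) := by
      apply Continuous.sub
      · exact Complex.continuous_exp.comp
          (continuous_const.mul (Complex.continuous_ofReal.sub continuous_const))
      · exact Complex.continuous_exp.comp
          (continuous_const.mul (continuous_const.sub Complex.continuous_ofReal))
    have hIc : IntervalIntegrable (fun τ =>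
        (Complex.exp (Complex.I * (lam n ω : ℂ) * ((τ : ℂ) - (t : ℂ)))
          - Complex.exp (Complex.I * (lam n ω : ℂ) * ((t : ℂ) - (τ : ℂ)))) *
        ∑' m : Fin ν → ℤ, c τ m * c τ (n - m)) MeasureTheory.volume 0 t := by
      apply ContinuousOn.intervalIntegrable
      exact (hker_cont.continuousOn.mul
        ((conv_tsum_continuousOn hρ hC.le c hc_cont hcb n).mono huIcc))
    have hIh : IntervalIntegrable (fun τ =>
        (Complex.exp (Complex.I * (lam n ω : ℂ) * ((τ : ℂ) - (t : ℂ)))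
          - Complex.exp (Complex.I * (lam n ω : ℂ) * ((t : ℂ) - (τ : ℂ)))) *
        ∑' m : Fin ν → ℤ, h τ m * h τ (n - m)) MeasureTheory.volume 0 t := by
      apply ContinuousOn.intervalIntegrable
      exact (hker_cont.continuousOn.mul
        ((conv_tsum_continuousOn hρ hC.le h hh_cont hhb n).mono huIcc))
    have heq : c t n - h t n
        = (Complex.I * (dotp n ω : ℂ) / (2 * (Real.sqrt (1 + (dotp n ω) ^ 2) : ℂ))) *
          ∫ τ in (0:ℝ)..t,
            ((Complex.exp (Complex.I * (lam n ω : ℂ) * ((τ : ℂ) - (t : ℂ)))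
                - Complex.exp (Complex.I * (lam n ω : ℂ) * ((t : ℂ) - (τ : ℂ)))) *
              (∑' m : Fin ν → ℤ, h τ m * h τ (n - m))
            - (Complex.exp (Complex.I * (lam n ω : ℂ) * ((τ : ℂ) - (t : ℂ)))
                - Complex.exp (Complex.I * (lam n ω : ℂ) * ((t : ℂ) - (τ : ℂ)))) *
              (∑' m : Fin ν → ℤ, c τ m * c τ (n - m))) := by
      rw [intervalIntegral.integral_sub hIh hIc, hce, hhe, h0 n, h0' n]
      ring
    -- bound the prefactor
    have hK : ‖Complex.I * (dotp n ω : ℂ)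
        / (2 * (Real.sqrt (1 + (dotp n ω) ^ 2) : ℂ))‖ ≤ 1 / 2 := by
      rw [norm_div, norm_mul, norm_mul, Complex.norm_I, one_mul, Complex.norm_two,
        Complex.norm_real, Complex.norm_real, Real.norm_eq_abs, Real.norm_eq_abs]
      set x := dotp n ω
      have h1 : |x| ≤ Real.sqrt (1 + x ^ 2) := by
        rw [← Real.sqrt_sq_eq_abs]
        exact Real.sqrt_le_sqrt (by nlinarith)
      have h2 : (0:ℝ) < Real.sqrt (1 + x ^ 2) := Real.sqrt_pos.mpr (by positivity)
      rw [abs_of_nonneg h2.le, div_le_iff₀ (by positivity)]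
      nlinarith
    -- bound the integral
    have hint : ‖∫ τ in (0:ℝ)..t,
        ((Complex.exp (Complex.I * (lam n ω : ℂ) * ((τ : ℂ) - (t : ℂ)))
            - Complex.exp (Complex.I * (lam n ω : ℂ) * ((t : ℂ) - (τ : ℂ)))) *
          (∑' m : Fin ν → ℤ, h τ m * h τ (n - m))
        - (Complex.exp (Complex.I * (lam n ω : ℂ) * ((τ : ℂ) - (t : ℂ)))
            - Complex.exp (Complex.I * (lam n ω : ℂ) * ((t : ℂ) - (τ : ℂ)))) *
          (∑' m : Fin ν → ℤ, c τ m * c τ (n - m)))‖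
        ≤ (2 * (2 * C₁ * S * M * Real.exp (-σ * l1Z n))) * |t - 0| := by
      apply intervalIntegral.norm_integral_le_of_norm_le_const
      intro τ hτ
      rw [Set.uIoc_of_le ht0] at hτ
      have hτI : τ ∈ Set.Icc (0:ℝ) t₁ := ⟨hτ.1.le, le_trans hτ.2 ht.2⟩
      rw [show ∀ A B C : ℂ, A * B - A * C = A * (B - C) from fun A B C => by ring]
      rw [norm_mul]
      have hker2 : 
          ‖Complex.exp (Complex.I * (lam n ω : ℂ) * ((τ : ℂ) - (t : ℂ)))
            - Complex.exp (Complex.I * (lam n ω : ℂ) * ((t : ℂ) - (τ : ℂ)))‖ ≤ 2 := by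
        have e1 : 
            ‖Complex.exp (Complex.I * (lam n ω : ℂ) * ((τ : ℂ) - (t : ℂ)))‖ = 1 :=
          abs_exp_eq_one (re_I_mul_ofReal_sub _ _ _)
        have e2 : 
            ‖Complex.exp (Complex.I * (lam n ω : ℂ) * ((t : ℂ) - (τ : ℂ)))‖ = 1 :=
          abs_exp_eq_one (re_I_mul_ofReal_sub _ _ _)
        calc ‖_‖ ≤ ‖_‖ + ‖_‖ := by
              simpa using norm_sub_le
                (Complex.exp (Complex.I * (lam n ω : ℂ) * ((τ : ℂ) - (t : ℂ))))
                (Complex.exp (Complex.I * (lam n ω : ℂ) * ((t : ℂ) - (τ : ℂ))))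
          _ = 2 := by rw [e1, e2]; norm_num
      exact mul_le_mul hker2 (hinner n τ hτI) (norm_nonneg _) (by norm_num)
    have habs : ‖c t n - h t n‖
        ≤ (1 / 2) * ((2 * (2 * C₁ * S * M * Real.exp (-σ * l1Z n))) * |t - 0|) := by
      rw [heq, norm_mul]
      exact mul_le_mul hK hint (norm_nonneg _) (by norm_num)
    have hwt : w t n ≤ Real.exp (σ * l1Z n) *
        ((1 / 2) * ((2 * (2 * C₁ * S * M * Real.exp (-σ * l1Z n))) * |t - 0|)) :=
      mul_le_mul_of_nonneg_left habs (Real.exp_nonneg _)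
    have hexp1 : Real.exp (σ * l1Z n) * Real.exp (-σ * l1Z n) = 1 := by
      rw [← Real.exp_add]
      have : σ * l1Z n + -σ * l1Z n = 0 := by ring
      rw [this, Real.exp_zero]
    have habs_t : |t - 0| ≤ t₁ := by
      rw [sub_zero, abs_of_nonneg ht0]; exact ht.2
    calc w t n ≤ Real.exp (σ * l1Z n) *
          ((1 / 2) * ((2 * (2 * C₁ * S * M * Real.exp (-σ * l1Z n))) * |t - 0|)) := hwt
      _ = (2 * C₁ * S * M * |t - 0|) *
            (Real.exp (σ * l1Z n) * Real.exp (-σ * l1Z n)) := by ring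
      _ = 2 * C₁ * S * M * |t - 0| := by rw [hexp1, mul_one]
      _ ≤ 2 * C₁ * S * M * t₁ :=
          mul_le_mul_of_nonneg_left habs_t
            (mul_nonneg (by positivity) hM0)
      _ = 2 * C₁ * S * t₁ * M := by ring
  have hMM : M ≤ 2 * C₁ * S * t₁ * M := by
    rw [hMdef]
    apply ciSup_le
    rintro ⟨⟨t, ht⟩, n⟩
    exact key t ht n
  have hfrac : 2 * C₁ * S * t₁ ≤ 1 / 2 := by
    have h1 : t₁ ≤ 1 / (1 + 4 * C₁ * S) := min_le_right _ _
    have h2 : (0:ℝ) < 1 + 4 * C₁ * S := by positivity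
    rw [le_div_iff₀ h2] at h1
    nlinarith
  have hMzero : M = 0 := by nlinarith
  intro t ht n
  have h1 := hMle t ht n
  rw [hMzero] at h1
  have h3 : w t n = 0 := le_antisymm h1 (hw_nonneg t n)
  rw [hwdef] at h3
  have h4 : Real.exp (σ * l1Z n) * ‖c t n - h t n‖ = 0 := h3
  have h5 : ‖c t n - h t n‖ = 0 := by
    rcases mul_eq_zero.mp h4 with h | h
    · exact absurd h (Real.exp_ne_zero _)
    · exact h
  exact sub_eq_zero.mp (norm_eq_zero.mp h5)
end
end
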